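/- arXiv:1605.00840 — 2 statements merged into one kernel-verified Lean document; each statement's English description precedes it below -/
import Mathlib

section
/- For every s ≥ 1, there exists a strictly increasing chain ∅ = α_0 < α_1 < ⋯ < α_D = β(s) in the poset 𝒜(s) with D = s·2^{s−1}, and every strictly increasing chain in 𝒜(s) from ∅ to β(s) has length at most s·2^{s−1}; that is, the maximal length of a chain from ∅ to β(s) in 𝒜(s) equals s·2^{s−1}. -/
namespace GH

/-- The order relation on finite sets of subsets of `{1,…,s}` (modelled as `Fin s`):
`α' ≤ α` iff there exists an injective map `f : α' → α` with `Ω ⊆ f Ω` for every `Ω ∈ α'`. -/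
def Ale {s : ℕ} (α' α : Finset (Finset (Fin s))) : Prop :=
  ∃ f : {Ω : Finset (Fin s) // Ω ∈ α'} → {Ω : Finset (Fin s) // Ω ∈ α},
    Function.Injective f ∧ ∀ Ω, Ω.1 ⊆ (f Ω).1

/-- The poset `𝒜(s)`: finite sets whose elements are nonempty subsets of `{1,…,s}`. -/
def A (s : ℕ) : Type := {α : Finset (Finset (Fin s)) // ∀ Ω ∈ α, Ω.Nonempty}

/-- The order relation of `𝒜(s)`. -/
def Ale' {s : ℕ} (α' α : A s) : Prop := Ale α'.1 α.1

/-- The strict order of `𝒜(s)`. -/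
def Alt' {s : ℕ} (α' α : A s) : Prop := Ale' α' α ∧ α' ≠ α

/-- The bottom element `∅ ∈ 𝒜(s)`. -/
def botA (s : ℕ) : A s := ⟨∅, fun _ h => absurd h (Finset.notMem_empty _)⟩

/-- The top element `β(s) ∈ 𝒜(s)`: the set of all nonempty subsets of `{1,…,s}`. -/
def topA (s : ℕ) : A s :=
  ⟨Finset.univ.filter (fun Ω : Finset (Fin s) => Ω.Nonempty),
    fun _ h => (Finset.mem_filter.mp h).2⟩

/-- weight -/
def w {s : ℕ} (α : Finset (Finset (Fin s))) : ℕ := ∑ Ω ∈ α, Ω.card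

lemma ale_refl {s : ℕ} (α : Finset (Finset (Fin s))) : Ale α α :=
  ⟨id, fun _ _ h => h, fun _ => subset_rfl⟩

lemma ale_of_subset {s : ℕ} {α' α : Finset (Finset (Fin s))} (h : α' ⊆ α) : Ale α' α :=
  ⟨fun x => ⟨x.1, h x.2⟩, fun a b hab => by
    apply Subtype.ext; have := congrArg Subtype.val hab; simpa using this,
    fun _ => subset_rfl⟩

lemma ale_trans {s : ℕ} {a b c : Finset (Finset (Fin s))} (h1 : Ale a b) (h2 : Ale b c) :
    Ale a c := by
  obtain ⟨f, hf, hfs⟩ := h1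
  obtain ⟨g, hg, hgs⟩ := h2
  exact ⟨g ∘ f, hg.comp hf, fun Ω => (hfs Ω).trans (hgs (f Ω))⟩

lemma w_eq_sum_subtype {s : ℕ} (α : Finset (Finset (Fin s))) :
    w α = ∑ x : {Ω : Finset (Fin s) // Ω ∈ α}, x.1.card := by
  rw [w, ← Finset.sum_coe_sort]

lemma w_mono {s : ℕ} {α' α : Finset (Finset (Fin s))} (h : Ale α' α) : w α' ≤ w α := by
  obtain ⟨f, hf, hfs⟩ := h
  rw [w_eq_sum_subtype, w_eq_sum_subtype]
  calc ∑ x : {Ω : Finset (Fin s) // Ω ∈ α'}, x.1.card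
      ≤ ∑ x : {Ω : Finset (Fin s) // Ω ∈ α'}, (f x).1.card :=
        Finset.sum_le_sum (fun x _ => Finset.card_le_card (hfs x))
    _ = ∑ y ∈ Finset.univ.image f, y.1.card :=
        (Finset.sum_image (g := f) (f := fun y : {Ω : Finset (Fin s) // Ω ∈ α} => y.1.card) (fun a _ b _ hab => hf hab)).symm
    _ ≤ ∑ y : {Ω : Finset (Fin s) // Ω ∈ α}, y.1.card :=
        Finset.sum_le_sum_of_subset (Finset.subset_univ _)

lemma w_strict {s : ℕ} {α' α : Finset (Finset (Fin s))} (h : Ale α' α)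
    (hval : ∀ Ω ∈ α, Ω.Nonempty) (hne : α' ≠ α) : w α' < w α := by
  obtain ⟨f, hf, hfs⟩ := h
  by_contra hle
  push_neg at hle
  -- hle : w α ≤ w α'
  have h1 : ∑ x : {Ω : Finset (Fin s) // Ω ∈ α'}, x.1.card
      ≤ ∑ x : {Ω : Finset (Fin s) // Ω ∈ α'}, (f x).1.card :=
    Finset.sum_le_sum (fun x _ => Finset.card_le_card (hfs x))
  have h2 : ∑ x : {Ω : Finset (Fin s) // Ω ∈ α'}, (f x).1.card
      = ∑ y ∈ Finset.univ.image f, y.1.card :=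
    (Finset.sum_image (g := f) (f := fun y : {Ω : Finset (Fin s) // Ω ∈ α} => y.1.card) (fun a _ b _ hab => hf hab)).symm
  have h3 : ∑ y ∈ Finset.univ.image f, y.1.card
      ≤ ∑ y : {Ω : Finset (Fin s) // Ω ∈ α}, y.1.card :=
    Finset.sum_le_sum_of_subset (Finset.subset_univ _)
  have hall : ∑ x : {Ω : Finset (Fin s) // Ω ∈ α'}, x.1.card
      = ∑ y : {Ω : Finset (Fin s) // Ω ∈ α}, y.1.card := by
    have := w_eq_sum_subtype α' ▸ w_eq_sum_subtype α ▸ hle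
    omega
  -- image f = univ
  have himg : Finset.univ.image f = (Finset.univ : Finset {Ω : Finset (Fin s) // Ω ∈ α}) := by
    by_contra hcon
    have hsub : Finset.univ.image f ⊆ Finset.univ := Finset.subset_univ _
    have hss : Finset.univ.image f ⊂ Finset.univ := hsub.ssubset_of_ne hcon
    obtain ⟨y, hy, hyn⟩ := Finset.exists_of_ssubset hss
    have : ∑ z ∈ Finset.univ.image f, z.1.card
        < ∑ z : {Ω : Finset (Fin s) // Ω ∈ α}, z.1.card :=
      Finset.sum_lt_sum_of_subset hsub hy hyn (Finset.card_pos.mpr (hval y.1 y.2))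
        (fun _ _ _ => Nat.zero_le _)
    omega
  -- each x.1 = (f x).1
  have hptwise : ∀ x : {Ω : Finset (Fin s) // Ω ∈ α'}, x.1 = (f x).1 := by
    intro x
    by_contra hx
    have hlt : x.1.card < (f x).1.card :=
      Finset.card_lt_card (Finset.ssubset_iff_subset_ne.mpr ⟨hfs x, hx⟩)
    have : ∑ z : {Ω : Finset (Fin s) // Ω ∈ α'}, z.1.card
        < ∑ z : {Ω : Finset (Fin s) // Ω ∈ α'}, (f z).1.card :=
      Finset.sum_lt_sum (fun z _ => Finset.card_le_card (hfs z)) ⟨x, Finset.mem_univ _, hlt⟩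
    omega
  apply hne
  apply Finset.Subset.antisymm
  · intro Ω hΩ
    have h' : Ω = (f ⟨Ω, hΩ⟩).1 := hptwise ⟨Ω, hΩ⟩
    rw [h']
    exact (f ⟨Ω, hΩ⟩).2
  · intro Ω hΩ
    have : (⟨Ω, hΩ⟩ : {Ω : Finset (Fin s) // Ω ∈ α}) ∈ Finset.univ.image f := by
      rw [himg]; exact Finset.mem_univ _
    obtain ⟨x, _, hx⟩ := Finset.mem_image.mp this
    have h' : x.1 = Ω := by rw [hptwise x, hx]
    exact h' ▸ x.2

lemma sum_powerset_card {γ : Type*} [DecidableEq γ] (t : Finset γ) :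
    ∑ Ω ∈ t.powerset, Ω.card = t.card * 2 ^ (t.card - 1) := by
  induction t using Finset.induction_on with
  | empty => simp
  | @insert a t ha ih =>
    rw [Finset.powerset_insert, Finset.sum_union, Finset.sum_image]
    · have h1 : ∑ Ω ∈ t.powerset, (insert a Ω).card = ∑ Ω ∈ t.powerset, (Ω.card + 1) := by
        apply Finset.sum_congr rfl
        intro Ω hΩ
        rw [Finset.card_insert_of_notMem (fun hc => ha (Finset.mem_powerset.mp hΩ hc))]
      rw [h1, Finset.sum_add_distrib, Finset.sum_const, Finset.card_powerset, ih,
        Finset.card_insert_of_notMem ha]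
      rcases Nat.eq_zero_or_pos t.card with h | h
      · simp [h]
      · have : t.card - 1 + 1 = t.card := Nat.succ_pred_eq_of_pos h
        have h2 : (2:ℕ) ^ t.card = 2 * 2 ^ (t.card - 1) := by
          conv_lhs => rw [← this, pow_succ]
          ring
        simp only [smul_eq_mul, Nat.add_sub_cancel]
        rw [h2]; ring
    · intro x hx y hy hxy
      have hax : a ∉ x := fun hc => ha (Finset.mem_powerset.mp hx hc)
      have hay : a ∉ y := fun hc => ha (Finset.mem_powerset.mp hy hc)
      have h := congrArg (fun z => Finset.erase z a) hxy
      simpa [Finset.erase_insert hax, Finset.erase_insert hay] using h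
    · rw [Finset.disjoint_right]
      intro Ω hΩ
      obtain ⟨x, _, rfl⟩ := Finset.mem_image.mp hΩ
      intro hc
      exact ha (Finset.mem_powerset.mp hc (Finset.mem_insert_self a x))

lemma w_top (s : ℕ) : w (topA s).1 = s * 2 ^ (s - 1) := by
  have h1 : w (topA s).1 = ∑ Ω : Finset (Fin s), Ω.card := by
    rw [w, topA]
    rw [Finset.sum_filter]
    apply Finset.sum_congr rfl
    intro Ω _
    by_cases h : Ω.Nonempty
    · simp [h]
    · simp [h, Finset.not_nonempty_iff_eq_empty.mp h]
  have h2 : ∑ Ω : Finset (Fin s), Ω.card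
      = ∑ Ω ∈ (Finset.univ : Finset (Fin s)).powerset, Ω.card := by
    apply Finset.sum_congr _ (fun _ _ => rfl)
    ext Ω; simp
  rw [h1, h2, sum_powerset_card]
  simp

lemma subset_top {s : ℕ} (α : A s) : α.1 ⊆ (topA s).1 := by
  intro Ω hΩ
  exact Finset.mem_filter.mpr ⟨Finset.mem_univ _, α.2 Ω hΩ⟩

lemma w_le_top {s : ℕ} (α : A s) : w α.1 ≤ s * 2 ^ (s - 1) := by
  rw [← w_top s]
  exact Finset.sum_le_sum_of_subset (subset_top α)

lemma eq_top_of_w {s : ℕ} (α : A s) (h : w α.1 = s * 2 ^ (s - 1)) : α = topA s := by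
  apply Subtype.ext
  by_contra hne
  have hss : α.1 ⊂ (topA s).1 := (subset_top α).ssubset_of_ne hne
  obtain ⟨y, hy, hyn⟩ := Finset.exists_of_ssubset hss
  have : w α.1 < w (topA s).1 :=
    Finset.sum_lt_sum_of_subset (subset_top α) hy hyn
      (Finset.card_pos.mpr ((topA s).2 y hy)) (fun _ _ _ => Nat.zero_le _)
  rw [w_top] at this
  omega

lemma exists_step {s : ℕ} (α : A s) (hne : α ≠ topA s) :
    ∃ α' : A s, Ale α.1 α'.1 ∧ w α'.1 = w α.1 + 1 := by
  have hss : α.1 ⊂ (topA s).1 := (subset_top α).ssubset_of_ne (fun h => hne (Subtype.ext h))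
  have hT : ((topA s).1 \ α.1).Nonempty := by
    rw [Finset.sdiff_nonempty]
    exact fun h => hss.2 h
  obtain ⟨Ω, hΩmem, hΩmin⟩ := Finset.exists_min_image _ (fun Ω => Ω.card) hT
  have hΩtop : Ω ∈ (topA s).1 := (Finset.mem_sdiff.mp hΩmem).1
  have hΩα : Ω ∉ α.1 := (Finset.mem_sdiff.mp hΩmem).2
  have hΩne : Ω.Nonempty := (Finset.mem_filter.mp hΩtop).2
  rcases Nat.lt_or_ge Ω.card 2 with hc | hc
  · -- add Ω
    refine ⟨⟨insert Ω α.1, ?_⟩, ale_of_subset (Finset.subset_insert _ _), ?_⟩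
    · intro T hT
      rcases Finset.mem_insert.mp hT with rfl | h
      · exact hΩne
      · exact α.2 T h
    · show w (insert Ω α.1) = w α.1 + 1
      rw [w, Finset.sum_insert hΩα]
      have : Ω.card = 1 := le_antisymm (by omega) (Finset.card_pos.mpr hΩne)
      rw [this, w]; ring
  · -- replace Ω' = Ω.erase x by Ω
    obtain ⟨x, hx⟩ := id hΩne
    set Ω' := Ω.erase x with hΩ'def
    have hcard' : Ω'.card = Ω.card - 1 := Finset.card_erase_of_mem hx
    have hΩ'ne : Ω'.Nonempty := by
      rw [← Finset.card_pos, hcard']; omega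
    have hΩ'mem : Ω' ∈ α.1 := by
      by_contra hc'
      have : Ω' ∈ (topA s).1 \ α.1 :=
        Finset.mem_sdiff.mpr ⟨Finset.mem_filter.mpr ⟨Finset.mem_univ _, hΩ'ne⟩, hc'⟩
      have := hΩmin Ω' this
      omega
    have hΩ'sub : Ω' ⊆ Ω := Finset.erase_subset _ _
    have hΩ'neΩ : Ω' ≠ Ω := by
      intro h
      have := hcard' ▸ congrArg Finset.card h
      omega
    refine ⟨⟨insert Ω (α.1.erase Ω'), ?_⟩, ?_, ?_⟩
    · intro T hT
      rcases Finset.mem_insert.mp hT with rfl | h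
      · exact hΩne
      · exact α.2 T (Finset.mem_of_mem_erase h)
    · -- Ale
      refine ⟨fun T => if h : T.1 = Ω' then ⟨Ω, Finset.mem_insert_self _ _⟩
        else ⟨T.1, Finset.mem_insert_of_mem (Finset.mem_erase.mpr ⟨h, T.2⟩)⟩, ?_, ?_⟩
      · intro a b hab
        by_cases ha' : a.1 = Ω' <;> by_cases hb' : b.1 = Ω' <;>
          simp only [ha', hb', dif_pos, dif_neg, not_false_iff] at hab
        · exact Subtype.ext (ha'.trans hb'.symm)
        · exfalso
          apply hΩα
          have h : Ω = b.1 := by have := congrArg Subtype.val hab; simpa using this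
          rw [h]; exact b.2
        · exfalso
          apply hΩα
          have h : Ω = a.1 := by have := congrArg Subtype.val hab; simpa using this.symm
          rw [h]; exact a.2
        · apply Subtype.ext
          have := congrArg Subtype.val hab; simpa using this
      · intro T
        by_cases hT' : T.1 = Ω'
        · simp only [hT', dif_pos]
          exact hT' ▸ hΩ'sub
        · simp only [hT', dif_neg, not_false_iff]
          exact subset_rfl
    · -- weight
      show w (insert Ω (α.1.erase Ω')) = w α.1 + 1
      have h1 : Ω ∉ α.1.erase Ω' := fun h => hΩα (Finset.mem_of_mem_erase h)
      rw [w, Finset.sum_insert h1]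
      have h2 : ∑ T ∈ α.1.erase Ω', T.card + Ω'.card = ∑ T ∈ α.1, T.card :=
        Finset.sum_erase_add _ _ hΩ'mem
      have h3 : Ω'.card + 1 = Ω.card := by rw [hcard']; omega
      rw [w]
      omega

open Classical in
noncomputable def nextA {s : ℕ} (α : A s) : A s :=
  if h : α = topA s then topA s else (exists_step α h).choose

lemma nextA_ale {s : ℕ} (α : A s) : Ale' α (nextA α) := by
  rw [nextA]
  by_cases h : α = topA s
  · rw [dif_pos h, h]; exact ale_refl _
  · rw [dif_neg h]; exact (exists_step α h).choose_spec.1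

noncomputable def gseq (s : ℕ) : ℕ → A s
  | 0 => botA s
  | n + 1 => nextA (gseq s n)

lemma w_gseq {s : ℕ} : ∀ k, k ≤ s * 2 ^ (s - 1) → w (gseq s k).1 = k := by
  intro k
  induction k with
  | zero => intro _; simp [gseq, botA, w]
  | succ n ih =>
    intro h
    have hn := ih (by omega)
    have hne : gseq s n ≠ topA s := by
      intro hc
      rw [hc] at hn
      have := w_top s
      omega
    show w (nextA (gseq s n)).1 = n + 1
    rw [nextA, dif_neg hne]
    rw [(exists_step (gseq s n) hne).choose_spec.2, hn]

lemma gseq_ale {s : ℕ} {m n : ℕ} (h : m ≤ n) : Ale' (gseq s m) (gseq s n) := by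
  induction n with
  | zero => rw [Nat.le_zero.mp h]; exact ale_refl _
  | succ k ih =>
    rcases Nat.lt_or_ge m (k+1) with h' | h'
    · exact ale_trans (ih (by omega)) (nextA_ale (gseq s k))
    · rw [le_antisymm h h']; exact ale_refl _

/-- **Theorem (maximal chains in `𝒜(s)`).**
For every `s ≥ 1` there is a strictly increasing chain `∅ = α_0 < α_1 < ⋯ < α_D = β(s)` in the
poset `𝒜(s)` with `D = s·2^(s-1)`, and every strictly increasing chain in `𝒜(s)` from `∅` to
`β(s)` has length at most `s·2^(s-1)`; that is, the maximal length of a chain from `∅` to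
`β(s)` in `𝒜(s)` equals `s·2^(s-1)`. -/
theorem maximal_chain_length (s : ℕ) (hs : 1 ≤ s) :
    (∃ c : Fin (s * 2 ^ (s - 1) + 1) → A s,
      (∀ i j, i < j → Alt' (c i) (c j)) ∧
      c 0 = botA s ∧ c (Fin.last _) = topA s) ∧
    (∀ (D : ℕ) (c : Fin (D + 1) → A s),
      (∀ i j, i < j → Alt' (c i) (c j)) →
      c 0 = botA s → c (Fin.last D) = topA s → D ≤ s * 2 ^ (s - 1)) := by
  set N := s * 2 ^ (s - 1) with hN
  constructor
  · refine ⟨fun i => gseq s i.1, ?_, ?_, ?_⟩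
    · intro i j hij
      have hle : Ale' (gseq s i.1) (gseq s j.1) := gseq_ale (le_of_lt hij)
      refine ⟨hle, ?_⟩
      intro hc
      have hi : w (gseq s i.1).1 = i.1 := w_gseq i.1 (by omega)
      have hj : w (gseq s j.1).1 = j.1 := w_gseq j.1 (by omega)
      have hc' : gseq s i.1 = gseq s j.1 := hc
      rw [hc'] at hi
      have : (i : ℕ) < j := hij
      omega
    · rfl
    · apply eq_top_of_w
      exact w_gseq N (le_refl _)
  · intro D c hchain h0 hlast
    have key : ∀ k : ℕ, (hk : k ≤ D) → k ≤ w (c ⟨k, by omega⟩).1 := by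
      intro k
      induction k with
      | zero => intro _; exact Nat.zero_le _
      | succ n ih =>
        intro hk
        have h1 := ih (by omega)
        have hlt : (⟨n, by omega⟩ : Fin (D+1)) < ⟨n+1, by omega⟩ := by
          simp [Fin.lt_def]
        obtain ⟨hle, hne⟩ := hchain _ _ hlt
        have := w_strict hle (c ⟨n+1, by omega⟩).2 (fun h => hne (Subtype.ext h))
        omega
    have := key D (le_refl _)
    have hl : (⟨D, by omega⟩ : Fin (D+1)) = Fin.last D := rfl
    rw [hl, hlast] at this
    rw [w_top] at this
    exact this

end GH
end

section
/- Let s ≥ 1, let n_1,…,n_s be integers with n_i ≥ 2 for all i, and let p, q be integers with p ≥ 2^s and q − p ≥ (n_1+1)(n_2+1)⋯(n_s+1) − 2^s. Consider the subposet P of 𝒜(s) consisting of those α with |α| ≤ p and Σ_{Ω ∈ α} (Π_{i ∈ Ω} n_i − 1) ≤ q − p. Then β(s) belongs to P and is the greatest element of P, i.e., α ≤ β(s) for every α ∈ P. -/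
namespace GH

/-- The set `β(s)` of all nonempty subsets of `{1,…,s}`. -/
def betaA (s : ℕ) : Finset (Finset (Fin s)) :=
  Finset.univ.filter (fun Ω : Finset (Fin s) => Ω.Nonempty)

/-- **Theorem (`β(s)` is the greatest element of the truncated poset).**
Let `s ≥ 1`, let `n_1,…,n_s` be integers with `n_i ≥ 2` for all `i`, and let `p`, `q` be
integers with `p ≥ 2^s` and `q - p ≥ (n_1+1)⋯(n_s+1) - 2^s`.  Consider the subposet `P` of
`𝒜(s)` consisting of those `α` with `|α| ≤ p` and `∑_{Ω ∈ α} (∏_{i ∈ Ω} n_i - 1) ≤ q - p`.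
Then `β(s)` belongs to `P` and is the greatest element of `P`. -/
theorem betaA_greatest (s : ℕ) (hs : 1 ≤ s) (n : Fin s → ℤ) (hn : ∀ i, 2 ≤ n i)
    (p q : ℤ) (hp : 2 ^ s ≤ p)
    (hq : (∏ i, (n i + 1)) - 2 ^ s ≤ q - p) :
    (((betaA s).card : ℤ) ≤ p ∧
      (∑ Ω ∈ betaA s, ((∏ i ∈ Ω, n i) - 1)) ≤ q - p) ∧
    (∀ α : Finset (Finset (Fin s)), (∀ Ω ∈ α, Ω.Nonempty) →
      ((α.card : ℤ) ≤ p) → ((∑ Ω ∈ α, ((∏ i ∈ Ω, n i) - 1)) ≤ q - p) →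
      Ale α (betaA s)) := by
  have hbeta : betaA s = Finset.univ.erase (∅ : Finset (Fin s)) := by
    rw [← Finset.filter_ne']
    simp [betaA, Finset.nonempty_iff_ne_empty]
  have hcard : (betaA s).card = 2 ^ s - 1 := by
    rw [hbeta, Finset.card_erase_of_mem (Finset.mem_univ _)]
    simp
  have hsumall : ∑ Ω : Finset (Fin s), ∏ i ∈ Ω, n i = ∏ i, (n i + 1) := by
    rw [Finset.prod_add]
    simp [Finset.powerset_univ]
  have hsum : ∑ Ω ∈ betaA s, ∏ i ∈ Ω, n i = (∏ i, (n i + 1)) - 1 := by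
    have := Finset.add_sum_erase Finset.univ (fun Ω : Finset (Fin s) => ∏ i ∈ Ω, n i)
      (Finset.mem_univ (∅ : Finset (Fin s)))
    rw [← hbeta] at this
    simp only [Finset.prod_empty] at this
    omega
  refine ⟨⟨?_, ?_⟩, ?_⟩
  · rw [hcard]
    have h1 : (1:ℕ) ≤ 2 ^ s := Nat.one_le_two_pow
    push_cast [h1]
    have : ((2:ℤ) ^ s) ≤ p := by exact_mod_cast hp
    omega
  · rw [Finset.sum_sub_distrib, hsum, Finset.sum_const, hcard]
    have h1 : (1:ℕ) ≤ 2 ^ s := Nat.one_le_two_pow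
    rw [nsmul_eq_mul, mul_one]
    push_cast [h1]
    linarith [hq]
  · intro α hα _ _
    refine ⟨fun Ω => ⟨Ω.1, ?_⟩, ?_, fun Ω => subset_refl _⟩
    · simp [betaA, hα Ω.1 Ω.2]
    · intro a b hab
      simp only [Subtype.mk.injEq] at hab
      exact Subtype.ext (by have h := Subtype.mk.inj hab; exact h)

end GH
end
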